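/- Let u, v, w be a basis of ℝ³, γ ≠ 0, and x = γ·u − v + γ·w. If the quadrilateral with vertices [u],[v],[w],[x] has inscribed conic with tangency points [u+v], [v+w], [w+x], [x+u], then the four points [u−v], [v−w], [w−x], [x−u] are also the tangency points of an inscribed conic of the same quadrilateral: there exists a nonzero symmetric bilinear form ψ with ψ(u, u−v) = ψ(v, u−v) = ψ(v, v−w) = ψ(w, v−w) = ψ(w, w−x) = ψ(x, w−x) = ψ(x, x−u) = ψ(u, x−u) = 0. -/

import Mathlib

set_option maxHeartbeats 1000000


/-- If the quadrilateral `[u],[v],[w],[x]` (with `x = γ•u - v + γ•w`) has an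
inscribed conic with tangency points `[u+v], [v+w], [w+x], [x+u]`, then the points
`[u−v], [v−w], [w−x], [x−u]` are also the tangency points of an inscribed conic. -/
theorem stmt2 (u v w : Fin 3 → ℝ)
    (hb : LinearIndependent ℝ ![u, v, w])
    (hsp : Submodule.span ℝ ({u, v, w} : Set (Fin 3 → ℝ)) = ⊤)
    (γ : ℝ) (hγ : γ ≠ 0) (x : Fin 3 → ℝ) (hx : x = γ • u - v + γ • w)
    (φ : (Fin 3 → ℝ) →ₗ[ℝ] (Fin 3 → ℝ) →ₗ[ℝ] ℝ) (hφ : φ ≠ 0)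
    (hφsymm : ∀ y z, φ y z = φ z y)
    (h1 : φ u (u + v) = 0) (h2 : φ v (u + v) = 0)
    (h3 : φ v (v + w) = 0) (h4 : φ w (v + w) = 0)
    (h5 : φ w (w + x) = 0) (h6 : φ x (w + x) = 0)
    (h7 : φ x (x + u) = 0) (h8 : φ u (x + u) = 0) :
    ∃ ψ : (Fin 3 → ℝ) →ₗ[ℝ] (Fin 3 → ℝ) →ₗ[ℝ] ℝ, ψ ≠ 0 ∧ (∀ y z, ψ y z = ψ z y) ∧
      ψ u (u - v) = 0 ∧ ψ v (u - v) = 0 ∧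
      ψ v (v - w) = 0 ∧ ψ w (v - w) = 0 ∧
      ψ w (w - x) = 0 ∧ ψ x (w - x) = 0 ∧
      ψ x (x - u) = 0 ∧ ψ u (x - u) = 0 := by
  have hr : Set.range ![u, v, w] = ({u, v, w} : Set (Fin 3 → ℝ)) := by
    ext y
    simp [Fin.exists_fin_succ, Fin.exists_fin_two, or_assoc]
    constructor
    · rintro (h | h | h) <;> simp [h]
    · rintro (h | h | h) <;> simp [h]
  have hsp' : ⊤ ≤ Submodule.span ℝ (Set.range ![u, v, w]) := by
    rw [hr, hsp]
  let B : Module.Basis (Fin 3) ℝ (Fin 3 → ℝ) := Module.Basis.mk hb hsp'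
  set c : Fin 3 → ((Fin 3 → ℝ) →ₗ[ℝ] ℝ) := fun i => B.coord i with hc
  set k : ℝ := (2 - γ) / γ with hk
  have hcB : ∀ i j, c i (B j) = if j = i then 1 else 0 := by
    intro i j
    simp [hc, Module.Basis.coord_apply, Module.Basis.repr_self, Finsupp.single_apply]
  have hBu : B 0 = u := by simp [B]
  have hBv : B 1 = v := by simp [B]
  have hBw : B 2 = w := by simp [B]
  have hcu : ∀ i, c i u = if (0 : Fin 3) = i then 1 else 0 := fun i => by
    rw [← hBu]; exact hcB i 0
  have hcv : ∀ i, c i v = if (1 : Fin 3) = i then 1 else 0 := fun i => by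
    rw [← hBv]; exact hcB i 1
  have hcw : ∀ i, c i w = if (2 : Fin 3) = i then 1 else 0 := fun i => by
    rw [← hBw]; exact hcB i 2
  have hcx0 : c 0 x = γ := by
    simp [hx, map_add, map_sub, map_smul, hcu, hcv, hcw]
  have hcx1 : c 1 x = -1 := by
    simp [hx, map_add, map_sub, map_smul, hcu, hcv, hcw]
  have hcx2 : c 2 x = γ := by
    simp [hx, map_add, map_sub, map_smul, hcu, hcv, hcw]
  refine ⟨(c 0).smulRight (c 0 + c 1 + k • c 2)
      + (c 1).smulRight (c 0 + c 1 + c 2)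
      + (c 2).smulRight (k • c 0 + c 1 + c 2), ?_, ?_, ?_, ?_, ?_, ?_, ?_, ?_, ?_, ?_⟩
  · intro h
    have := congrArg (fun f => f u u) h
    simp [LinearMap.smulRight_apply, hcu] at this
  · intro y z
    simp only [LinearMap.add_apply, LinearMap.smulRight_apply, LinearMap.smul_apply,
      smul_eq_mul]
    ring
  all_goals
    simp only [LinearMap.add_apply, LinearMap.smulRight_apply, LinearMap.smul_apply,
      map_sub, hcu, hcv, hcw, hcx0, hcx1, hcx2, smul_eq_mul, hk]
    norm_num [Fin.ext_iff]
    try field_simp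
    try ring
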